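/- arXiv:2007.11826 — 4 statements merged into one kernel-verified Lean document; each statement's English description precedes it below -/
import Mathlib

section
/- Let C ⊆ ℝⁿ be a closed convex set and let f, g : ℝⁿ → ℝ be convex functions with g continuous. Let D = {x ∈ C : g(x) ≤ 0}. Suppose D and C \ D are both nonempty, that y ∈ D minimizes f over D, that z ∈ C \ D minimizes f over C \ D, and that f(z) ≤ f(y). Then there exists x* ∈ D with g(x*) = 0 and f(x*) ≤ f(y); in particular x* also minimizes f over D. -/
/-- **Lemma (one-cut equality).** Let `C ⊆ ℝⁿ` be a closed convex set, `f g : ℝⁿ → ℝ`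
convex with `g` continuous, `D = {x ∈ C | g x ≤ 0}`. If `D` and `C \ D` are nonempty,
`y` minimizes `f` over `D`, `z` minimizes `f` over `C \ D`, and `f z ≤ f y`, then there
is `x* ∈ D` with `g x* = 0`, `f x* ≤ f y`, and `x*` also minimizes `f` over `D`. -/
theorem one_cut_equality {n : ℕ}
    (C : Set (EuclideanSpace ℝ (Fin n)))
    (hCclosed : IsClosed C) (hCconv : Convex ℝ C)
    (f g : EuclideanSpace ℝ (Fin n) → ℝ)
    (hf : ConvexOn ℝ Set.univ f) (hg : ConvexOn ℝ Set.univ g)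
    (hgcont : Continuous g)
    (D : Set (EuclideanSpace ℝ (Fin n)))
    (hD : D = {x ∈ C | g x ≤ 0})
    (hDne : D.Nonempty) (hCDne : (C \ D).Nonempty)
    (y z : EuclideanSpace ℝ (Fin n))
    (hyD : y ∈ D) (hymin : IsMinOn f D y)
    (hzCD : z ∈ C \ D) (hzmin : IsMinOn f (C \ D) z)
    (hfzy : f z ≤ f y) :
    ∃ xstar ∈ D, g xstar = 0 ∧ f xstar ≤ f y ∧ IsMinOn f D xstar := by
  obtain ⟨hzC, hzD⟩ := hzCD
  have hyC : y ∈ C := (hD ▸ hyD).1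
  have hgy : g y ≤ 0 := (hD ▸ hyD).2
  have hgz : 0 < g z := by
    by_contra h
    push_neg at h
    exact hzD (hD ▸ Set.mem_sep hzC h)
  set φ : ℝ → EuclideanSpace ℝ (Fin n) := fun t => (1 - t) • y + t • z with hφ
  have hφc : Continuous (g ∘ φ) := by
    apply hgcont.comp
    exact ((continuous_const.sub continuous_id).smul continuous_const).add
      (continuous_id.smul continuous_const)
  have hiv := intermediate_value_Icc (by norm_num : (0:ℝ) ≤ 1) hφc.continuousOn
  have hφ0 : φ 0 = y := by simp [hφ]
  have hφ1 : φ 1 = z := by simp [hφ]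
  have h0 : (0:ℝ) ∈ Set.Icc ((g ∘ φ) 0) ((g ∘ φ) 1) := by
    simp only [Function.comp, hφ0, hφ1]
    exact ⟨hgy, hgz.le⟩
  obtain ⟨t, ht, hgt⟩ := hiv h0
  have htC : φ t ∈ C := hCconv hyC hzC (sub_nonneg.2 ht.2) ht.1 (sub_add_cancel 1 t)
  have hgt' : g (φ t) = 0 := hgt
  have htD : φ t ∈ D := hD ▸ Set.mem_sep htC hgt'.le
  have hft : f (φ t) ≤ f y := by
    have h2 := hf.2 (Set.mem_univ y) (Set.mem_univ z)
      (sub_nonneg.2 ht.2) ht.1 (sub_add_cancel 1 t)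
    have h2' : f (φ t) ≤ (1 - t) * f y + t * f z := by
      simpa [smul_eq_mul] using h2
    nlinarith [h2', ht.1, ht.2, hfzy]
  exact ⟨φ t, htD, hgt', hft, fun w hw => le_trans hft (hymin hw)⟩
end

section
/- Consider a hyperplane arrangement in ℝⁿ and a convex continuous function f : ℝⁿ → ℝ. Let P and P′ be neighboring sign patterns differing exactly at the index j, with R_P and R_{P′} both nonempty. Suppose f attains its infimum over R_P and over R_{P′}, and that inf_{v ∈ R_{P′}} f(v) ≤ inf_{v ∈ R_P} f(v). Then there exists x* ∈ R_P with ⟨a j, x*⟩ = b j and f(x*) = inf_{v ∈ R_P} f(v); in particular the infimum of f over R_P equals the infimum of f over the face R_P ∩ {x : ⟨a j, x⟩ = b j}. -/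
open scoped RealInnerProductSpace

/-- The closed region of a hyperplane arrangement (normals `a`, offsets `b`)
corresponding to the sign pattern `P` (`true` encodes `+1`, `false` encodes `−1`). -/
def hypRegion {n : ℕ} {ι : Type*} (a : ι → EuclideanSpace ℝ (Fin n)) (b : ι → ℝ)
    (P : ι → Bool) : Set (EuclideanSpace ℝ (Fin n)) :=
  {x | ∀ i, if P i then b i ≤ ⟪a i, x⟫ else ⟪a i, x⟫ ≤ b i}

/-- If `P` and `P'` are neighboring patterns differing exactly at index `j`, both regions
are nonempty, `f` is convex and continuous and attains its minimum over each region at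
`y` resp. `y'` with `f y' ≤ f y`, then some `x* ∈ R_P` on the hyperplane `⟨a j, ·⟩ = b j`
attains the minimum of `f` over `R_P`; in particular the infimum of `f` over `R_P`
equals its infimum over the common face `R_P ∩ {x | ⟨a j, x⟩ = b j}`. -/
theorem neighbor_face_min {n : ℕ} {ι : Type*} [Fintype ι]
    (a : ι → EuclideanSpace ℝ (Fin n)) (b : ι → ℝ)
    (f : EuclideanSpace ℝ (Fin n) → ℝ)
    (hf : ConvexOn ℝ Set.univ f) (hfcont : Continuous f)
    (P P' : ι → Bool) (j : ι)
    (hj : P j ≠ P' j) (hagree : ∀ i, i ≠ j → P i = P' i)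
    (hPne : (hypRegion a b P).Nonempty) (hP'ne : (hypRegion a b P').Nonempty)
    (y y' : EuclideanSpace ℝ (Fin n))
    (hy : y ∈ hypRegion a b P) (hymin : IsMinOn f (hypRegion a b P) y)
    (hy' : y' ∈ hypRegion a b P') (hy'min : IsMinOn f (hypRegion a b P') y')
    (hle : f y' ≤ f y) :
    ∃ xstar ∈ hypRegion a b P, ⟪a j, xstar⟫ = b j ∧ f xstar = f y ∧
      sInf (f '' hypRegion a b P) =
        sInf (f '' (hypRegion a b P ∩ {x | ⟪a j, x⟫ = b j})) := by
  -- the affine function along the segment from `y` to `y'`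
  set g : ℝ → ℝ := fun t => (1 - t) * ⟪a j, y⟫ + t * ⟪a j, y'⟫ with hg
  have hgc : Continuous g := by fun_prop
  -- find t₀ ∈ [0,1] with g t₀ = b j
  have hex : ∃ t ∈ Set.Icc (0:ℝ) 1, g t = b j := by
    have hyj := hy j
    have hy'j := hy' j
    have hg0 : g 0 = ⟪a j, y⟫ := by simp [hg]
    have hg1 : g 1 = ⟪a j, y'⟫ := by simp [hg]
    cases hPj : P j with
    | true =>
      have hP'j : P' j = false := by
        cases h : P' j
        · rfl
        · exact absurd (hPj.trans h.symm) hj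
      simp only [hPj, if_true] at hyj
      simp only [hP'j, Bool.false_eq_true, if_false] at hy'j
      have : b j ∈ Set.Icc (g 1) (g 0) := by
        rw [hg0, hg1]; exact ⟨hy'j, hyj⟩
      have := intermediate_value_Icc' (by norm_num : (0:ℝ) ≤ 1) hgc.continuousOn this
      obtain ⟨t, ht, hgt⟩ := this
      exact ⟨t, ht, hgt⟩
    | false =>
      have hP'j : P' j = true := by
        cases h : P' j
        · exact absurd (hPj.trans h.symm) hj
        · rfl
      simp only [hPj, Bool.false_eq_true, if_false] at hyj
      simp only [hP'j, if_true] at hy'j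
      have : b j ∈ Set.Icc (g 0) (g 1) := by
        rw [hg0, hg1]; exact ⟨hyj, hy'j⟩
      have := intermediate_value_Icc (by norm_num : (0:ℝ) ≤ 1) hgc.continuousOn this
      obtain ⟨t, ht, hgt⟩ := this
      exact ⟨t, ht, hgt⟩
  obtain ⟨t, ⟨ht0, ht1⟩, hgt⟩ := hex
  set x : EuclideanSpace ℝ (Fin n) := (1 - t) • y + t • y' with hx
  have hinner : ∀ i, ⟪a i, x⟫ = (1 - t) * ⟪a i, y⟫ + t * ⟪a i, y'⟫ := by
    intro i
    rw [hx, inner_add_right, real_inner_smul_right, real_inner_smul_right]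
  have hxj : ⟪a j, x⟫ = b j := by rw [hinner j]; exact hgt
  -- x ∈ R_P
  have hxP : x ∈ hypRegion a b P := by
    intro i
    by_cases hij : i = j
    · subst hij
      cases h : P i <;> simp [hxj]
    · have hyi := hy i
      have hy'i := hy' i
      rw [← hagree i hij] at hy'i
      cases h : P i
      · simp only [h, Bool.false_eq_true, if_false] at hyi hy'i ⊢
        rw [hinner i]
        nlinarith
      · simp only [h, if_true] at hyi hy'i ⊢
        rw [hinner i]
        nlinarith
  -- f x = f y
  have hfx_le : f x ≤ f y := by
    have := hf.2 (Set.mem_univ y) (Set.mem_univ y') (by linarith : (0:ℝ) ≤ 1 - t) ht0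
      (by ring)
    calc f x ≤ (1 - t) * f y + t * f y' := this
    _ ≤ (1 - t) * f y + t * f y := by nlinarith
    _ = f y := by ring
  have hfx : f x = f y := le_antisymm hfx_le (hymin hxP)
  refine ⟨x, hxP, hxj, hfx, ?_⟩
  -- sInf equalities
  have h1 : sInf (f '' hypRegion a b P) = f y := by
    apply le_antisymm
    · exact csInf_le ⟨f y, by rintro _ ⟨z, hz, rfl⟩; exact hymin hz⟩ ⟨y, hy, rfl⟩
    · exact le_csInf ⟨f y, y, hy, rfl⟩ (by rintro _ ⟨z, hz, rfl⟩; exact hymin hz)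
  have h2 : sInf (f '' (hypRegion a b P ∩ {x | ⟪a j, x⟫ = b j})) = f y := by
    apply le_antisymm
    · refine csInf_le ⟨f y, ?_⟩ ⟨x, ⟨hxP, hxj⟩, hfx⟩
      rintro _ ⟨z, hz, rfl⟩; exact hymin hz.1
    · refine le_csInf ⟨f y, x, ⟨hxP, hxj⟩, hfx⟩ ?_
      rintro _ ⟨z, hz, rfl⟩; exact hymin hz.1
  rw [h1, h2]
end

section
/- Consider a hyperplane arrangement in ℝⁿ, a nonempty compact convex set C ⊆ ℝⁿ, and a convex continuous function f : ℝⁿ → ℝ. Let A be a sign pattern such that R_A ∩ C contains a point minimizing f over C, and let A′ be a sign pattern such that R_{A′} ∩ C is nonempty. Then there exist k ≥ 0 and sign patterns A = A⁰, A¹, …, A^k = A′ such that: (i) consecutive patterns Aᶦ and Aᶦ⁺¹ are neighbors, (ii) R_{Aᶦ} ∩ C is nonempty for every i ≤ k, and (iii) inf_{v ∈ R_{Aᶦ} ∩ C} f(v) ≤ inf_{v ∈ R_{Aᶦ⁺¹} ∩ C} f(v) for every i < k. -/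
open scoped RealInnerProductSpace

private lemma affine_between {c d bb t₁ t₂ t : ℝ} (h₁ : bb ≤ c + t₁ * d)
    (h₂ : bb ≤ c + t₂ * d) (ht₁ : t₁ ≤ t) (ht₂ : t ≤ t₂) : bb ≤ c + t * d := by
  rcases eq_or_lt_of_le (ht₁.trans ht₂) with h | h
  · have : t = t₁ := le_antisymm (h ▸ ht₂) ht₁
    rwa [this]
  · nlinarith [mul_nonneg (sub_nonneg.2 ht₂) (sub_nonneg.2 h₁),
      mul_nonneg (sub_nonneg.2 ht₁) (sub_nonneg.2 h₂)]

private lemma affine_between' {c d bb t₁ t₂ t : ℝ} (h₁ : c + t₁ * d ≤ bb)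
    (h₂ : c + t₂ * d ≤ bb) (ht₁ : t₁ ≤ t) (ht₂ : t ≤ t₂) : c + t * d ≤ bb := by
  have := affine_between (c := -c) (d := -d) (bb := -bb)
    (by linarith : -bb ≤ -c + t₁ * -d) (by linarith : -bb ≤ -c + t₂ * -d) ht₁ ht₂
  linarith

private lemma affine_left_le {c d bb s : ℝ} (hs : 0 < s)
    (h : ∀ t, 0 ≤ t → t < s → c + t * d ≤ bb) : c + s * d ≤ bb := by
  rcases le_or_gt d 0 with hd | hd
  · have h0 := h 0 le_rfl hs
    nlinarith
  · by_contra hc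
    push_neg at hc
    set ε := min s ((c + s * d - bb) / d) with hε
    have hε0 : 0 < ε := lt_min hs (div_pos (by linarith) hd)
    have hεs : ε ≤ s := min_le_left _ _
    have h1 := h (s - ε / 2) (by linarith) (by linarith)
    have h2 : ε * d ≤ c + s * d - bb := (le_div_iff₀ hd).mp (min_le_right _ _)
    nlinarith

private lemma affine_left_ge {c d bb s : ℝ} (hs : 0 < s)
    (h : ∀ t, 0 ≤ t → t < s → bb ≤ c + t * d) : bb ≤ c + s * d := by
  have := affine_left_le (c := -c) (d := -d) (bb := -bb) hs
    (fun t ht0 hts => by have := h t ht0 hts; linarith)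
  linarith

private lemma chain_to_fin {α : Type*} (Stp : α → α → Prop) (Pr : α → Prop)
    (l : List α) (hne : l ≠ []) (hch : l.Chain' Stp) (hall : ∀ x ∈ l, Pr x) :
    ∃ (k : ℕ) (B : Fin (k + 1) → α), B 0 = l.head hne ∧ B (Fin.last k) = l.getLast hne ∧
      (∀ i : Fin k, Stp (B i.castSucc) (B i.succ)) ∧ ∀ i, Pr (B i) := by
  have hpos : 0 < l.length := List.length_pos_iff.2 hne
  refine ⟨l.length - 1, fun i => l.get ⟨i, by have := i.isLt; omega⟩, ?_, ?_, ?_, ?_⟩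
  · simp [List.getElem_zero]
  · rw [List.getLast_eq_getElem]
    simp
  · intro i
    have h1 : (i : ℕ) < l.length - 1 := i.isLt
    have := List.isChain_iff_getElem.mp hch i (by omega)
    convert this using 2 <;> rfl
  · intro i
    exact hall _ (List.get_mem l _)

/-- Within a nonempty compact convex set `C`, starting from a pattern `A` whose region
contains a minimizer of the convex continuous function `f` over `C`, any pattern `A'`
with `R_{A'} ∩ C ≠ ∅` can be reached by a path of neighboring patterns whose regions all
meet `C` and along which the infimum of `f` over `R ∩ C` is monotonically nondecreasing. -/
theorem increasing_sequence_of_patterns {n : ℕ} {ι : Type*} [Fintype ι]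
    (a : ι → EuclideanSpace ℝ (Fin n)) (b : ι → ℝ)
    (C : Set (EuclideanSpace ℝ (Fin n)))
    (hCne : C.Nonempty) (hCcomp : IsCompact C) (hCconv : Convex ℝ C)
    (f : EuclideanSpace ℝ (Fin n) → ℝ)
    (hf : ConvexOn ℝ Set.univ f) (hfcont : Continuous f)
    (A A' : ι → Bool)
    (v : EuclideanSpace ℝ (Fin n))
    (hv : v ∈ hypRegion a b A ∩ C) (hvmin : IsMinOn f C v)
    (hA' : (hypRegion a b A' ∩ C).Nonempty) :
    ∃ (k : ℕ) (B : Fin (k + 1) → ι → Bool),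
      B 0 = A ∧ B (Fin.last k) = A' ∧
      (∀ i : Fin k, ∃ j : ι, B i.castSucc j ≠ B i.succ j ∧
        ∀ i' : ι, i' ≠ j → B i.castSucc i' = B i.succ i') ∧
      (∀ i : Fin (k + 1), (hypRegion a b (B i) ∩ C).Nonempty) ∧
      (∀ i : Fin k,
        sInf (f '' (hypRegion a b (B i.castSucc) ∩ C)) ≤
          sInf (f '' (hypRegion a b (B i.succ) ∩ C))) := by
  classical
  set m : (ι → Bool) → ℝ := fun P => sInf (f '' (hypRegion a b P ∩ C)) with hm
  have hRclosed : ∀ P : ι → Bool, IsClosed (hypRegion a b P) := by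
    intro P
    have hrw : hypRegion a b P = ⋂ i, {x : EuclideanSpace ℝ (Fin n) |
        if P i then b i ≤ ⟪a i, x⟫ else ⟪a i, x⟫ ≤ b i} := by
      ext x; simp [hypRegion, Set.mem_iInter]
    rw [hrw]
    refine isClosed_iInter fun i => ?_
    by_cases h : P i
    · simp only [h, if_true]
      exact isClosed_le continuous_const (Continuous.inner continuous_const continuous_id)
    · simp only [h, if_false]
      exact isClosed_le (Continuous.inner continuous_const continuous_id) continuous_const
  have hRcpt : ∀ P : ι → Bool, IsCompact (hypRegion a b P ∩ C) := fun P =>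
    hCcomp.inter_left (hRclosed P)
  have hmin : ∀ P : ι → Bool, (hypRegion a b P ∩ C).Nonempty →
      ∃ y ∈ hypRegion a b P ∩ C, m P = f y ∧ ∀ z ∈ hypRegion a b P ∩ C, f y ≤ f z := by
    intro P hne
    obtain ⟨y, hy, hymin⟩ := (hRcpt P).exists_isMinOn hne hfcont.continuousOn
    have hmin' : ∀ z ∈ hypRegion a b P ∩ C, f y ≤ f z := fun z hz => isMinOn_iff.mp hymin z hz
    refine ⟨y, hy, ?_, hmin'⟩
    refine IsLeast.csInf_eq ⟨⟨y, hy, rfl⟩, ?_⟩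
    rintro w ⟨z, hz, rfl⟩
    exact hmin' z hz
  have hmle : ∀ (P : ι → Bool) (z), z ∈ hypRegion a b P ∩ C → m P ≤ f z := by
    intro P z hz
    obtain ⟨y, hy, hmy, hymin⟩ := hmin P ⟨z, hz⟩
    rw [hmy]; exact hymin z hz
  have hfvle : ∀ P : ι → Bool, v ∈ hypRegion a b P → m P = f v := by
    intro P hvP
    obtain ⟨y, hy, hmy, hymin⟩ := hmin P ⟨v, hvP, hv.2⟩
    rw [hmy]
    exact le_antisymm (hymin v ⟨hvP, hv.2⟩) (isMinOn_iff.mp hvmin y hy.2)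
  set Stp : (ι → Bool) → (ι → Bool) → Prop := fun P Q =>
    (∃ j, P j ≠ Q j ∧ ∀ i' ≠ j, P i' = Q i') ∧ m P ≤ m Q with hStp
  set Pth : (ι → Bool) → (ι → Bool) → Prop := fun P Q =>
    ∃ (l : List (ι → Bool)) (h : l ≠ []), l.head h = P ∧ l.getLast h = Q ∧
      l.Chain' Stp ∧ ∀ X ∈ l, (hypRegion a b X ∩ C).Nonempty with hPth
  have hsnoc : ∀ P Q, Pth A P → Stp P Q → (hypRegion a b Q ∩ C).Nonempty → Pth A Q := by
    rintro P Q ⟨l, hl, hhead, hlast, hch, hmem⟩ hst hQ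
    refine ⟨l ++ [Q], by simp, ?_, ?_, ?_, ?_⟩
    · rw [List.head_append_of_ne_nil hl]; exact hhead
    · exact List.getLast_append _
    · refine List.isChain_append.mpr ?_
      refine ⟨hch, List.isChain_singleton _, ?_⟩
      intro x hx y hy
      rw [List.getLast?_eq_getLast hl, Option.mem_some_iff] at hx
      simp only [List.head?_cons, Option.mem_some_iff] at hy
      subst hx; subst hy
      rw [hlast]; exact hst
    · intro X hX
      rcases List.mem_append.mp hX with h | h
      · exact hmem X h
      · simp only [List.mem_singleton] at h
        subst h; exact hQ
  have hvpath : ∀ P Q : ι → Bool, v ∈ hypRegion a b P → v ∈ hypRegion a b Q → Pth P Q := by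
    have key : ∀ (c : ℕ) (P Q : ι → Bool), v ∈ hypRegion a b P → v ∈ hypRegion a b Q →
        (Finset.univ.filter fun i => P i ≠ Q i).card ≤ c → Pth P Q := by
      intro c
      induction c with
      | zero =>
        intro P Q hvP hvQ hcard
        have hPQ : P = Q := by
          funext i
          by_contra hne
          have hmem : i ∈ Finset.univ.filter fun i => P i ≠ Q i := by simp [hne]
          have := Finset.card_pos.mpr ⟨i, hmem⟩
          omega
        subst hPQ
        exact ⟨[P], by simp, rfl, rfl, List.isChain_singleton _, by
          intro X hX; simp only [List.mem_singleton] at hX; subst hX; exact ⟨v, hvP, hv.2⟩⟩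
      | succ c ih =>
        intro P Q hvP hvQ hcard
        by_cases hPQ : P = Q
        · subst hPQ
          exact ⟨[P], by simp, rfl, rfl, List.isChain_singleton _, by
            intro X hX; simp only [List.mem_singleton] at hX; subst hX; exact ⟨v, hvP, hv.2⟩⟩
        · have hex : ∃ j, P j ≠ Q j := by
            by_contra hno; push_neg at hno; exact hPQ (funext hno)
          obtain ⟨j, hj⟩ := hex
          set P' := Function.update P j (Q j) with hP'
          have hvP' : v ∈ hypRegion a b P' := by
            intro i
            by_cases hij : i = j
            · subst hij; simp only [hP', Function.update_self]; exact hvQ i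
            · simp only [hP', Function.update_of_ne hij]; exact hvP i
          have hsub : (Finset.univ.filter fun i => P' i ≠ Q i) ⊆
              (Finset.univ.filter fun i => P i ≠ Q i).erase j := by
            intro i hi
            simp only [Finset.mem_filter, Finset.mem_univ, true_and] at hi
            have hij : i ≠ j := by
              intro h; subst h; exact hi (by simp [hP'])
            refine Finset.mem_erase.mpr ⟨hij, ?_⟩
            simp only [Finset.mem_filter, Finset.mem_univ, true_and]
            rwa [hP', Function.update_of_ne hij] at hi
          have hjmem : j ∈ Finset.univ.filter fun i => P i ≠ Q i := by simp [hj]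
          have hcard' : (Finset.univ.filter fun i => P' i ≠ Q i).card ≤ c := by
            have h1 := Finset.card_le_card hsub
            rw [Finset.card_erase_of_mem hjmem] at h1
            omega
          obtain ⟨l, hl, hhead, hlast, hch, hmem⟩ := ih P' Q hvP' hvQ hcard'
          refine ⟨P :: l, by simp, rfl, ?_, ?_, ?_⟩
          · rw [List.getLast_cons hl]; exact hlast
          · refine List.isChain_cons.mpr ⟨?_, hch⟩
            intro y hy
            rw [List.head?_eq_head hl, Option.mem_some_iff] at hy
            subst hy
            rw [hhead]
            refine ⟨⟨j, ?_, ?_⟩, ?_⟩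
            · simp only [hP', Function.update_self]; exact hj
            · intro i' hi'
              simp only [hP', Function.update_of_ne hi']
            · rw [hfvle P hvP, hfvle P' hvP']
          · intro X hX
            rcases List.mem_cons.mp hX with h | h
            · subst h; exact ⟨v, hvP, hv.2⟩
            · exact hmem X h
    intro P Q h1 h2
    exact key _ P Q h1 h2 le_rfl
  -- main induction
  have outer : ∀ (N : ℕ) (P₀ : ι → Bool), (hypRegion a b P₀ ∩ C).Nonempty →
      Set.ncard {Q : ι → Bool | (hypRegion a b Q ∩ C).Nonempty ∧ m Q < m P₀} ≤ N →
      Pth A P₀ := by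
    intro N
    induction N using Nat.strong_induction_on with
    | _ N IH =>
    intro P₀ hP₀ne hcard
    obtain ⟨y₀, hy₀, hmy₀, hy₀min⟩ := hmin P₀ hP₀ne
    set σ : ℝ → EuclideanSpace ℝ (Fin n) := fun t => (1 - t) • v + t • y₀ with hσ
    have hσ0 : σ 0 = v := by simp [hσ]
    have hσ1 : σ 1 = y₀ := by simp [hσ]
    have hσcont : Continuous σ := by
      exact ((continuous_const.sub continuous_id).smul continuous_const).add
        (continuous_id.smul continuous_const)
    have hσC : ∀ t, 0 ≤ t → t ≤ 1 → σ t ∈ C := fun t h0 h1 =>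
      hCconv hv.2 hy₀.2 (by linarith) h0 (by ring)
    have hinner : ∀ (i : ι) (t : ℝ), ⟪a i, σ t⟫ = ⟪a i, v⟫ + t * (⟪a i, y₀⟫ - ⟪a i, v⟫) := by
      intro i t
      simp only [hσ]
      rw [inner_add_right, real_inner_smul_right, real_inner_smul_right]
      ring
    have hmono : ∀ t t', 0 ≤ t → t ≤ t' → t' ≤ 1 → f (σ t) ≤ f (σ t') := by
      intro t t' h0 htt' h1'
      rcases eq_or_lt_of_le (h0.trans htt') with h | h
      · have ht0 : t = t' := le_antisymm htt' (h ▸ h0)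
        rw [ht0]
      · set r := t / t' with hr
        have hr0 : 0 ≤ r := div_nonneg h0 h.le
        have hr1 : r ≤ 1 := div_le_one_of_le₀ htt' h.le
        have e1 : r * t' = t := div_mul_cancel₀ t (ne_of_gt h)
        have e2 : (1 - r) + r * (1 - t') = 1 - t := by
          have : r * (1 - t') = r - t := by rw [mul_sub, mul_one, e1]
          linarith
        have hcomb : (1 - r) • v + r • σ t' = σ t := by
          simp only [hσ]
          rw [smul_add, smul_smul, smul_smul, ← add_assoc, ← add_smul, e2, e1]
        have hconv := hf.2 (Set.mem_univ v) (Set.mem_univ (σ t'))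
          (by linarith : (0:ℝ) ≤ 1 - r) hr0 (by ring)
        have hfv : f v ≤ f (σ t') := isMinOn_iff.mp hvmin _ (hσC t' (h0.trans htt') h1')
        calc f (σ t) = f ((1 - r) • v + r • σ t') := by rw [hcomb]
          _ ≤ (1 - r) * f v + r * f (σ t') := hconv
          _ ≤ (1 - r) * f (σ t') + r * f (σ t') := by nlinarith
          _ = f (σ t') := by ring
    have HIH : ∀ Q : ι → Bool, (hypRegion a b Q ∩ C).Nonempty → m Q < m P₀ → Pth A Q := by
      intro Q hQne hQlt
      have hss : {R' : ι → Bool | (hypRegion a b R' ∩ C).Nonempty ∧ m R' < m Q} ⊂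
          {R' : ι → Bool | (hypRegion a b R' ∩ C).Nonempty ∧ m R' < m P₀} := by
        constructor
        · intro X hX; exact ⟨hX.1, hX.2.trans hQlt⟩
        · intro hsub
          exact absurd (hsub ⟨hQne, hQlt⟩).2 (lt_irrefl _)
      have hlt' := Set.ncard_lt_ncard hss (Set.toFinite _)
      exact IH _ (lt_of_lt_of_le hlt' hcard) Q hQne le_rfl
    have inner : ∀ (c : ℕ) (P : ι → Bool) (s : ℝ) (S : Finset ι),
        0 ≤ s → s ≤ 1 → σ s ∈ hypRegion a b P → f (σ s) = m P →
        (∀ i : ι, (∃ t, 0 ≤ t ∧ t < s ∧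
          ¬(if P i then b i ≤ ⟪a i, σ t⟫ else ⟪a i, σ t⟫ ≤ b i)) → i ∈ S) →
        S.card ≤ c → Pth A P := by
      intro c
      induction c with
      | zero =>
        intro P s S hs0 hs1 hsP _hfm hS hcard
        have hvP : v ∈ hypRegion a b P := by
          rcases eq_or_lt_of_le hs0 with h | h
          · rw [← hσ0, h]; exact hsP
          · by_contra hnv
            have : ∃ i : ι, ¬(if P i then b i ≤ ⟪a i, σ 0⟫ else ⟪a i, σ 0⟫ ≤ b i) := by
              by_contra hno; push_neg at hno
              exact hnv (by rw [← hσ0]; exact fun i => hno i)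
            obtain ⟨i, hi⟩ := this
            have hiS : i ∈ S := hS i ⟨0, le_rfl, h, hi⟩
            have := Finset.card_pos.mpr ⟨i, hiS⟩
            omega
        exact hvpath A P hv.1 hvP
      | succ c ih =>
        intro P s S hs0 hs1 hsP hfm hS hcard
        set T : Set ℝ := Set.Icc (0:ℝ) 1 ∩ σ ⁻¹' (hypRegion a b P) with hT
        have hTne : T.Nonempty := ⟨s, ⟨hs0, hs1⟩, hsP⟩
        have hTclosed : IsClosed T := isClosed_Icc.inter ((hRclosed P).preimage hσcont)
        have hTbdd : BddBelow T := ⟨0, fun x hx => hx.1.1⟩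
        set s' := sInf T with hs'def
        have hs'T : s' ∈ T := hTclosed.csInf_mem hTne hTbdd
        obtain ⟨⟨hs'0, hs'1⟩, hs'P⟩ := hs'T
        have hs'le : s' ≤ s := csInf_le hTbdd ⟨⟨hs0, hs1⟩, hsP⟩
        have hviol : ∀ t, 0 ≤ t → t < s' → σ t ∉ hypRegion a b P := by
          intro t ht0 hts hmemt
          have : s' ≤ t := csInf_le hTbdd ⟨⟨ht0, hts.le.trans hs'1⟩, hmemt⟩
          linarith
        have hPC : σ s' ∈ hypRegion a b P ∩ C := ⟨hs'P, hσC s' hs'0 hs'1⟩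
        have hfs' : f (σ s') = m P :=
          le_antisymm (by rw [← hfm]; exact hmono s' s hs'0 hs'le hs1) (hmle P _ hPC)
        rcases eq_or_lt_of_le hs'0 with h0 | h0
        · have hvP : v ∈ hypRegion a b P := by rw [← hσ0, h0]; exact hs'P
          exact hvpath A P hv.1 hvP
        · -- find the crossing index
          have hcross : ∃ i : ι, ∀ t, 0 ≤ t → t < s' →
              ¬(if P i then b i ≤ ⟪a i, σ t⟫ else ⟪a i, σ t⟫ ≤ b i) := by
            by_contra hno
            push_neg at hno
            have h00 := hviol 0 le_rfl h0
            rcases isEmpty_or_nonempty ι with hemp | hιne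
            · exact h00 (fun i => isEmptyElim i)
            · choose tf h0f hsf hcf using hno
              haveI := hιne
              set tmax := Finset.univ.sup' Finset.univ_nonempty tf with htmax
              have htlt : tmax < s' := (Finset.sup'_lt_iff _).mpr fun i _ => hsf i
              have ht0 : 0 ≤ tmax :=
                (h0f hιne.some).trans (Finset.le_sup' tf (Finset.mem_univ hιne.some))
              refine hviol tmax ht0 htlt ?_
              intro i
              have hi1 := hcf i
              have hi2 : (if P i then b i ≤ ⟪a i, σ s'⟫ else ⟪a i, σ s'⟫ ≤ b i) := hs'P i
              have hle1 : tf i ≤ tmax := Finset.le_sup' tf (Finset.mem_univ i)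
              have hle2 : tmax ≤ s' := htlt.le
              by_cases hb : P i = true
              · rw [if_pos hb] at hi1 hi2 ⊢
                rw [hinner i] at hi1 hi2 ⊢
                exact affine_between hi1 hi2 hle1 hle2
              · rw [if_neg hb] at hi1 hi2 ⊢
                rw [hinner i] at hi1 hi2 ⊢
                exact affine_between' hi1 hi2 hle1 hle2
          obtain ⟨i, hi⟩ := hcross
          have heq : ⟪a i, σ s'⟫ = b i := by
            have h1 := hs'P i
            by_cases hb : P i = true
            · rw [if_pos hb] at h1
              have h2 : ⟪a i, σ s'⟫ ≤ b i := by
                rw [hinner i]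
                refine affine_left_le h0 (fun t ht0 hts => ?_)
                have h3 := hi t ht0 hts
                rw [if_pos hb] at h3
                push_neg at h3
                rw [hinner i] at h3
                exact h3.le
              exact le_antisymm h2 h1
            · rw [if_neg hb] at h1
              have h2 : b i ≤ ⟪a i, σ s'⟫ := by
                rw [hinner i]
                refine affine_left_ge h0 (fun t ht0 hts => ?_)
                have h3 := hi t ht0 hts
                rw [if_neg hb] at h3
                push_neg at h3
                rw [hinner i] at h3
                exact h3.le
              exact le_antisymm h1 h2
          set Q := Function.update P i (!(P i)) with hQdef
          have hQmem : σ s' ∈ hypRegion a b Q := by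
            intro j
            by_cases hj : j = i
            · subst hj
              simp only [hQdef, Function.update_self]
              rw [heq]
              split <;> exact le_rfl
            · simp only [hQdef, Function.update_of_ne hj]
              exact hs'P j
          have hQC : σ s' ∈ hypRegion a b Q ∩ C := ⟨hQmem, hσC s' hs'0 hs'1⟩
          have hQne : (hypRegion a b Q ∩ C).Nonempty := ⟨_, hQC⟩
          have hPne : (hypRegion a b P ∩ C).Nonempty := ⟨_, hPC⟩
          have hmQle : m Q ≤ f (σ s') := hmle Q _ hQC
          have hstep : Stp Q P := by
            refine ⟨⟨i, ?_, ?_⟩, ?_⟩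
            · simp only [hQdef, Function.update_self]
              exact Bool.not_ne_self (P i)
            · intro i' hi'
              simp only [hQdef, Function.update_of_ne hi']
            · rw [← hfs']; exact hmQle
          rcases lt_or_eq_of_le hmQle with hlt | heqm
          · -- strict decrease: use the outer induction hypothesis
            have hfs1 : f (σ s') ≤ m P₀ := by
              have := hmono s' 1 hs'0 hs'1 le_rfl
              rw [hσ1] at this
              rw [hmy₀]; exact this
            exact hsnoc Q P (HIH Q hQne (lt_of_lt_of_le hlt hfs1)) hstep hPne
          · -- tie: recurse along the segment
            have hiS : i ∈ S := hS i ⟨0, le_rfl, lt_of_lt_of_le h0 hs'le, hi 0 le_rfl h0⟩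
            have hrec : Pth A Q := by
              refine ih Q s' (S.erase i) hs'0 hs'1 hQmem heqm.symm ?_ ?_
              · rintro j ⟨t, ht0, hts, hviolQ⟩
                have hji : j ≠ i := by
                  intro h; subst h
                  apply hviolQ
                  have h3 := hi t ht0 hts
                  simp only [hQdef, Function.update_self]
                  by_cases hb : P j = true
                  · rw [if_pos hb] at h3
                    push_neg at h3
                    simp only [hb, Bool.not_true]
                    rw [if_neg (by simp)]
                    exact h3.le
                  · rw [if_neg hb] at h3
                    push_neg at h3
                    have hPj : P j = false := by revert hb; cases P j <;> simp
                    rw [if_pos (by simp [hPj] : (!P j) = true)]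
                    exact h3.le
                refine Finset.mem_erase.mpr ⟨hji, hS j ⟨t, ht0, lt_of_lt_of_le hts hs'le, ?_⟩⟩
                simp only [hQdef, Function.update_of_ne hji] at hviolQ
                exact hviolQ
              · have h1 := Finset.card_erase_of_mem hiS
                omega
            exact hsnoc Q P hrec hstep hPne
    exact inner (Finset.univ.card) P₀ 1 Finset.univ zero_le_one le_rfl
      (by rw [hσ1]; exact hy₀.1) (by rw [hσ1]; exact hmy₀.symm)
      (fun i _ => Finset.mem_univ i) le_rfl
  obtain ⟨l, hl, hhead, hlast, hch, hmem⟩ := outer _ A' hA' le_rfl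
  obtain ⟨k, B, hB0, hBl, hBstep, hBmem⟩ :=
    chain_to_fin Stp (fun X => (hypRegion a b X ∩ C).Nonempty) l hl hch hmem
  exact ⟨k, B, by rw [hB0, hhead], by rw [hBl, hlast],
    fun i => (hBstep i).1, hBmem, fun i => (hBstep i).2⟩
end

section
/- Consider a hyperplane arrangement in ℝⁿ and let S = [u, w] be the closed segment between two points u, w ∈ ℝⁿ. Let P and Q be sign patterns such that R_P ∩ S and R_Q ∩ S are nonempty. Then there exist k ≥ 0 and sign patterns P = P⁰, P¹, …, P^k = Q such that consecutive patterns Pᶦ and Pᶦ⁺¹ differ at exactly one index, and R_{Pᶦ} ∩ S is nonempty for every i ≤ k. -/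
open scoped RealInnerProductSpace


section Aux

variable {n : ℕ} {ι : Type*} [Fintype ι] [DecidableEq ι]

/-- Nat-indexed connectivity predicate. -/
def HypConn (a : ι → EuclideanSpace ℝ (Fin n)) (b : ι → ℝ)
    (u w : EuclideanSpace ℝ (Fin n)) (P Q : ι → Bool) : Prop :=
  ∃ (k : ℕ) (B : ℕ → ι → Bool),
    B 0 = P ∧ B k = Q ∧
    (∀ i < k, ∃ j, B i j ≠ B (i+1) j ∧ ∀ i' ≠ j, B i i' = B (i+1) i') ∧
    (∀ i ≤ k, (hypRegion a b (B i) ∩ segment ℝ u w).Nonempty)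

variable {a : ι → EuclideanSpace ℝ (Fin n)} {b : ι → ℝ}
  {u w : EuclideanSpace ℝ (Fin n)} {P Q M : ι → Bool}

lemma hypConn_refl (h : (hypRegion a b P ∩ segment ℝ u w).Nonempty) :
    HypConn a b u w P P :=
  ⟨0, fun _ => P, rfl, rfl, fun i hi => absurd hi (by omega), fun _ _ => h⟩

lemma HypConn.trans (h1 : HypConn a b u w P M) (h2 : HypConn a b u w M Q) :
    HypConn a b u w P Q := by
  obtain ⟨k₁, B₁, hB10, hB1k, hf1, hn1⟩ := h1
  obtain ⟨k₂, B₂, hB20, hB2k, hf2, hn2⟩ := h2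
  set B : ℕ → ι → Bool := fun i => if i ≤ k₁ then B₁ i else B₂ (i - k₁) with hB
  have key : ∀ i, k₁ ≤ i → B i = B₂ (i - k₁) := by
    intro i hi
    by_cases h : i ≤ k₁
    · have : i = k₁ := le_antisymm h hi
      subst this
      simp [hB, hB1k, hB20.symm]
    · simp [hB, h]
  have key2 : ∀ i, i ≤ k₁ → B i = B₁ i := by
    intro i hi; simp [hB, hi]
  refine ⟨k₁ + k₂, B, ?_, ?_, ?_, ?_⟩
  · rw [key2 _ (Nat.zero_le _), hB10]
  · rw [key _ (Nat.le_add_right _ _), Nat.add_sub_cancel_left, hB2k]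
  · intro i hi
    by_cases h : i + 1 ≤ k₁
    · rw [key2 _ (by omega), key2 _ h]
      exact hf1 i (by omega)
    · rw [key _ (by omega), key _ (by omega)]
      have h2 : i + 1 - k₁ = (i - k₁) + 1 := by omega
      rw [h2]
      exact hf2 (i - k₁) (by omega)
  · intro i hi
    by_cases h : i ≤ k₁
    · rw [key2 _ h]; exact hn1 i h
    · rw [key _ (by omega)]; exact hn2 (i - k₁) (by omega)


lemma hypConn_single (j : ι) (hj : P j ≠ Q j) (hother : ∀ i ≠ j, P i = Q i)
    (hP : (hypRegion a b P ∩ segment ℝ u w).Nonempty)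
    (hQ : (hypRegion a b Q ∩ segment ℝ u w).Nonempty) :
    HypConn a b u w P Q := by
  refine ⟨1, fun i => if i = 0 then P else Q, rfl, rfl, ?_, ?_⟩
  · intro i hi
    interval_cases i
    exact ⟨j, by simpa using hj, by simpa using hother⟩
  · intro i _
    by_cases h : i = 0 <;> simp [h, hP, hQ]

lemma mem_hypRegion_iff {x : EuclideanSpace ℝ (Fin n)} :
    x ∈ hypRegion a b P ↔ ∀ i, if P i then b i ≤ ⟪a i, x⟫ else ⟪a i, x⟫ ≤ b i :=
  Iff.rfl

/-- Hypercube connectivity: two patterns whose regions share a point of the segment. -/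
lemma hypConn_of_common_point (x : EuclideanSpace ℝ (Fin n)) (hxs : x ∈ segment ℝ u w) :
    ∀ (N : ℕ) (P Q : ι → Bool), (Finset.univ.filter fun j => P j ≠ Q j).card ≤ N →
      x ∈ hypRegion a b P → x ∈ hypRegion a b Q → HypConn a b u w P Q := by
  intro N
  induction N with
  | zero =>
    intro P Q hcard hxP hxQ
    have : P = Q := by
      funext j
      by_contra hj
      have : j ∈ Finset.univ.filter fun j => P j ≠ Q j := by simp [hj]
      have := Finset.card_pos.2 ⟨j, this⟩
      omega
    subst this
    exact hypConn_refl ⟨x, hxP, hxs⟩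
  | succ N ih =>
    intro P Q hcard hxP hxQ
    by_cases hPQ : P = Q
    · subst hPQ; exact hypConn_refl ⟨x, hxP, hxs⟩
    · have : ∃ j, P j ≠ Q j := by
        by_contra h
        push_neg at h
        exact hPQ (funext fun j => h j)
      obtain ⟨j, hj⟩ := this
      have heq : ⟪a j, x⟫ = b j := by
        have h1 := hxP j
        have h2 := hxQ j
        cases hPj : P j <;> cases hQj : Q j <;> simp_all <;> linarith
      set P' := Function.update P j (Q j) with hP'
      have hxP' : x ∈ hypRegion a b P' := by
        intro i
        by_cases h : i = j
        · subst h
          simp only [hP', Function.update_self]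
          split <;> simp [heq]
        · simpa [hP', Function.update_of_ne h] using hxP i
      have hcard' : (Finset.univ.filter fun i => P' i ≠ Q i).card ≤ N := by
        have hsub : (Finset.univ.filter fun i => P' i ≠ Q i)
            = (Finset.univ.filter fun i => P i ≠ Q i).erase j := by
          ext i
          by_cases h : i = j <;> simp [h, hP', Function.update_of_ne, Function.update_self]
        have hjmem : j ∈ Finset.univ.filter fun i => P i ≠ Q i := by simp [hj]
        rw [hsub, Finset.card_erase_of_mem hjmem]
        omega
      have step : HypConn a b u w P P' := by
        refine hypConn_single j ?_ ?_ ⟨x, hxP, hxs⟩ ⟨x, hxP', hxs⟩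
        · simp [hP', Function.update_self]; exact fun h => hj h
        · intro i hi; simp [hP', Function.update_of_ne hi]
      exact step.trans (ih P' Q hcard' hxP' hxQ)

lemma hypConn_main (x_Q : EuclideanSpace ℝ (Fin n)) (hxQR : x_Q ∈ hypRegion a b Q)
    (hxQs : x_Q ∈ segment ℝ u w) :
    ∀ (N : ℕ) (P : ι → Bool) (x_P : EuclideanSpace ℝ (Fin n)),
      (Finset.univ.filter fun j => P j ≠ Q j).card ≤ N →
      x_P ∈ hypRegion a b P → x_P ∈ segment ℝ u w → HypConn a b u w P Q := by
  intro N
  induction N with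
  | zero =>
    intro P x_P hcard hxPR hxPs
    have hPQ : P = Q := by
      funext j
      by_contra hj
      have hmem : j ∈ Finset.univ.filter fun j => P j ≠ Q j := by simp [hj]
      have := Finset.card_pos.2 ⟨j, hmem⟩
      omega
    subst hPQ
    exact hypConn_refl ⟨x_P, hxPR, hxPs⟩
  | succ N ih =>
    intro P x_P hcard hxPR hxPs
    by_cases hq : x_Q ∈ hypRegion a b P
    · exact hypConn_of_common_point x_Q hxQs (N+1) P Q hcard hq hxQR
    set z : ℝ → EuclideanSpace ℝ (Fin n) := fun s => (1-s) • x_P + s • x_Q with hz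
    have hz0 : z 0 = x_P := by simp [hz]
    have hz1 : z 1 = x_Q := by simp [hz]
    have hinner : ∀ (i : ι) (s : ℝ),
        ⟪a i, z s⟫ = ⟪a i, x_P⟫ + s * (⟪a i, x_Q⟫ - ⟪a i, x_P⟫) := by
      intro i s
      simp only [hz, inner_add_right, real_inner_smul_right]
      ring
    have hzc : Continuous z := by fun_prop
    have hseg : ∀ s ∈ Set.Icc (0:ℝ) 1, z s ∈ segment ℝ u w := by
      intro s hs
      apply (convex_segment (𝕜 := ℝ) u w).segment_subset hxPs hxQs
      exact ⟨1-s, s, by linarith [hs.2], hs.1, by ring, rfl⟩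
    set T : Set ℝ := {s | s ∈ Set.Icc (0:ℝ) 1 ∧ z s ∈ hypRegion a b P} with hT
    have hT0 : (0:ℝ) ∈ T := ⟨⟨le_refl 0, zero_le_one⟩, hz0 ▸ hxPR⟩
    have hTbdd : BddAbove T := ⟨1, fun s hs => hs.1.2⟩
    have hregion : ∀ R : ι → Bool, IsClosed (hypRegion a b R) := by
      intro R
      have hrw : hypRegion a b R =
          ⋂ i, {x : EuclideanSpace ℝ (Fin n) |
            if R i then b i ≤ ⟪a i, x⟫ else ⟪a i, x⟫ ≤ b i} := by
        ext x
        simp [hypRegion, Set.mem_iInter]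
      rw [hrw]
      refine isClosed_iInter fun i => ?_
      have hcont : Continuous fun x : EuclideanSpace ℝ (Fin n) => ⟪a i, x⟫ :=
        continuous_const.inner continuous_id
      cases hRi : R i
      · simpa [hRi] using isClosed_le hcont continuous_const
      · simpa [hRi] using isClosed_le continuous_const hcont
    have hTclosed : IsClosed T := by
      have : T = Set.Icc (0:ℝ) 1 ∩ z ⁻¹' (hypRegion a b P) := rfl
      rw [this]
      exact isClosed_Icc.inter ((hregion P).preimage hzc)
    set s₀ := sSup T with hs₀
    have hs₀T : s₀ ∈ T := hTclosed.csSup_mem ⟨0, hT0⟩ hTbdd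
    have hs₀lt : s₀ < 1 := by
      rcases lt_or_eq_of_le hs₀T.1.2 with h | h
      · exact h
      · exact absurd (by rw [← hz1, ← h]; exact hs₀T.2) hq
    have hub : ∀ s ∈ T, s ≤ s₀ := fun s hs => le_csSup hTbdd hs
    have key : ∃ i, ⟪a i, z s₀⟫ = b i ∧
        ((P i = true ∧ ⟪a i, x_Q⟫ - ⟪a i, x_P⟫ < 0) ∨
         (P i = false ∧ 0 < ⟪a i, x_Q⟫ - ⟪a i, x_P⟫)) := by
      by_contra hcon
      push_neg at hcon
      have hev : ∀ i : ι, ∀ᶠ s in nhdsWithin s₀ (Set.Ioi s₀),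
          (if P i then b i ≤ ⟪a i, z s⟫ else ⟪a i, z s⟫ ≤ b i) := by
        intro i
        have hsat := hs₀T.2 i
        cases hPi : P i with
        | true =>
          simp only [hPi, if_true] at hsat ⊢
          rcases lt_or_eq_of_le hsat with hlt | heq
          · have hcont : Continuous fun s : ℝ => ⟪a i, z s⟫ :=
              continuous_const.inner hzc
            have hopen : ∀ᶠ s in nhds s₀, b i < ⟪a i, z s⟫ :=
              (isOpen_lt continuous_const hcont).mem_nhds hlt
            exact (hopen.filter_mono nhdsWithin_le_nhds).mono fun s hs => le_of_lt hs
          · have hslope : 0 ≤ ⟪a i, x_Q⟫ - ⟪a i, x_P⟫ :=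
              (hcon i heq.symm).1 hPi
            refine eventually_mem_nhdsWithin.mono fun s hs => ?_
            have hs' : s₀ ≤ s := le_of_lt hs
            rw [hinner i s]
            rw [hinner i s₀] at heq
            nlinarith [mul_nonneg (sub_nonneg.2 hs') hslope]
        | false =>
          simp only [hPi, if_false, Bool.false_eq_true] at hsat ⊢
          rcases lt_or_eq_of_le hsat with hlt | heq
          · have hcont : Continuous fun s : ℝ => ⟪a i, z s⟫ :=
              continuous_const.inner hzc
            have hopen : ∀ᶠ s in nhds s₀, ⟪a i, z s⟫ < b i :=
              (isOpen_lt hcont continuous_const).mem_nhds hlt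
            exact (hopen.filter_mono nhdsWithin_le_nhds).mono fun s hs => le_of_lt hs
          · have hslope : ⟪a i, x_Q⟫ - ⟪a i, x_P⟫ ≤ 0 :=
              (hcon i heq).2 hPi
            refine eventually_mem_nhdsWithin.mono fun s hs => ?_
            have hs' : s₀ ≤ s := le_of_lt hs
            rw [hinner i s]
            rw [hinner i s₀] at heq
            nlinarith [mul_nonpos_of_nonneg_of_nonpos (sub_nonneg.2 hs') hslope]
      have hall : ∀ᶠ s in nhdsWithin s₀ (Set.Ioi s₀), z s ∈ hypRegion a b P :=
        (Filter.eventually_all.mpr hev).mono fun s hs i => hs i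
      have hlt1 : ∀ᶠ s in nhdsWithin s₀ (Set.Ioi s₀), s < 1 := by
        filter_upwards [Ioo_mem_nhdsGT_of_mem ⟨le_refl s₀, hs₀lt⟩] with s hs
        exact hs.2
      have hgt : ∀ᶠ s in nhdsWithin s₀ (Set.Ioi s₀), s₀ < s :=
        eventually_mem_nhdsWithin
      obtain ⟨s, h1, h2, h3⟩ := (hall.and (hlt1.and hgt)).exists
      have hsT : s ∈ T := ⟨⟨by linarith [hs₀T.1.1], le_of_lt h2⟩, h1⟩
      linarith [hub s hsT]
    obtain ⟨i, heq, hslope⟩ := key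
    set P' := Function.update P i (!(P i)) with hP'
    have hzs₀seg : z s₀ ∈ segment ℝ u w := hseg s₀ hs₀T.1
    have hzP' : z s₀ ∈ hypRegion a b P' := by
      intro j
      by_cases h : j = i
      · subst h
        simp only [hP', Function.update_self]
        split
        · exact heq.ge
        · exact heq.le
      · simpa [hP', Function.update_of_ne h] using hs₀T.2 j
    have hxQstrict : (∀ hp : P i = true, ⟪a i, x_Q⟫ < b i) ∧
        (∀ hp : P i = false, b i < ⟪a i, x_Q⟫) := by
      constructor
      · intro hp
        rcases hslope with ⟨_, hsl⟩ | ⟨hf, _⟩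
        · have h1 : ⟪a i, x_Q⟫ = ⟪a i, x_P⟫ + 1 * (⟪a i, x_Q⟫ - ⟪a i, x_P⟫) := by ring
          rw [hinner i s₀] at heq
          nlinarith
        · rw [hp] at hf; exact absurd hf (by simp)
      · intro hp
        rcases hslope with ⟨ht, _⟩ | ⟨_, hsl⟩
        · rw [hp] at ht; exact absurd ht (by simp)
        · rw [hinner i s₀] at heq
          nlinarith
    have hQi : Q i = !(P i) := by
      have hQcond := hxQR i
      cases hPi : P i
      · have hlt := hxQstrict.2 hPi
        cases hQi' : Q i
        · rw [hQi'] at hQcond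
          simp only [Bool.false_eq_true, if_false] at hQcond
          linarith
        · simp
      · have hlt := hxQstrict.1 hPi
        cases hQi' : Q i
        · simp
        · rw [hQi'] at hQcond
          simp only [if_true] at hQcond
          linarith
    have hPQi : P i ≠ Q i := by rw [hQi]; cases P i <;> simp
    have hcard' : (Finset.univ.filter fun j => P' j ≠ Q j).card ≤ N := by
      have hsub : (Finset.univ.filter fun j => P' j ≠ Q j)
          = (Finset.univ.filter fun j => P j ≠ Q j).erase i := by
        ext j
        by_cases h : j = i
        · subst h
          simp [hP', Function.update_self, hQi]
        · simp [h, hP', Function.update_of_ne h]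
      have himem : i ∈ Finset.univ.filter fun j => P j ≠ Q j := by simp [hPQi]
      rw [hsub, Finset.card_erase_of_mem himem]
      have := Finset.card_pos.2 ⟨i, himem⟩
      omega
    have hstep : HypConn a b u w P P' := by
      refine hypConn_single i ?_ ?_ ⟨z s₀, hs₀T.2, hzs₀seg⟩ ⟨z s₀, hzP', hzs₀seg⟩
      · simp only [hP', Function.update_self]
        cases P i <;> simp
      · intro j hj
        simp [hP', Function.update_of_ne hj]
    exact hstep.trans (ih P' (z s₀) hcard' hzP' hzs₀seg)


end Aux

/-- Any two regions of a hyperplane arrangement that meet a fixed closed segment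
`[u, w]` are connected in the neighborhood graph through regions that all meet the
segment. -/
theorem regions_touching_segment_connected {n : ℕ} {ι : Type*} [Fintype ι]
    (a : ι → EuclideanSpace ℝ (Fin n)) (b : ι → ℝ)
    (u w : EuclideanSpace ℝ (Fin n))
    (P Q : ι → Bool)
    (hP : (hypRegion a b P ∩ segment ℝ u w).Nonempty)
    (hQ : (hypRegion a b Q ∩ segment ℝ u w).Nonempty) :
    ∃ (k : ℕ) (B : Fin (k + 1) → ι → Bool),
      B 0 = P ∧ B (Fin.last k) = Q ∧
      (∀ i : Fin k, ∃ j : ι, B i.castSucc j ≠ B i.succ j ∧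
        ∀ i' : ι, i' ≠ j → B i.castSucc i' = B i.succ i') ∧
      (∀ i : Fin (k + 1), (hypRegion a b (B i) ∩ segment ℝ u w).Nonempty) := by
  haveI : DecidableEq ι := Classical.decEq ι
  obtain ⟨x_P, hxPR, hxPs⟩ := hP
  obtain ⟨x_Q, hxQR, hxQs⟩ := hQ
  obtain ⟨k, B, hB0, hBk, hflip, hne⟩ :=
    hypConn_main x_Q hxQR hxQs ((Finset.univ.filter fun j => P j ≠ Q j).card)
      P x_P le_rfl hxPR hxPs
  refine ⟨k, fun i => B (i : ℕ), ?_, ?_, ?_, ?_⟩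
  · simpa using hB0
  · simpa using hBk
  · intro i
    simpa [Fin.coe_castSucc, Fin.val_succ] using hflip (i : ℕ) i.isLt
  · intro i
    exact hne (i : ℕ) (Nat.lt_succ_iff.mp i.isLt)
end
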